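/- There is an identity-on-objects multifunctor q from the multicategory of raw optics over a strict monoidal category C to the symmetric multicategory of diagram contexts over C, gluing each raw optic (f₀,...,fₙ) to the diagram context f₀ ⨾ (id_{M₁}⊗x₁⊗id_{N₁}) ⨾ f₁ ⨾ ... ⨾ (id_{Mₙ}⊗xₙ⊗id_{Nₙ}) ⨾ fₙ, and this multifunctor is full on the symmetrization: every diagram context arises as q of some raw optic after permuting hole order. -/

import Mathlib

open CategoryTheory

/-- A strict monoidal structure on a category whose objects form a monoid:
a tensor on morphisms that is functorial and strictly associative and unital. -/
class SMC (C : Type u) [Category.{v} C] [Monoid C] where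
  tens : ∀ {W X Y Z : C}, (W ⟶ X) → (Y ⟶ Z) → (W * Y ⟶ X * Z)
  tens_id : ∀ (X Y : C), tens (𝟙 X) (𝟙 Y) = 𝟙 (X * Y)
  tens_comp : ∀ {X₁ X₂ X₃ Y₁ Y₂ Y₃ : C} (f₁ : X₁ ⟶ X₂) (f₂ : X₂ ⟶ X₃)
      (g₁ : Y₁ ⟶ Y₂) (g₂ : Y₂ ⟶ Y₃),
      tens (f₁ ≫ f₂) (g₁ ≫ g₂) = tens f₁ g₁ ≫ tens f₂ g₂
  tens_assoc : ∀ {X X' Y Y' Z Z' : C} (f : X ⟶ X') (g : Y ⟶ Y') (h : Z ⟶ Z'),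
      tens (tens f g) h =
        eqToHom (mul_assoc X Y Z) ≫ tens f (tens g h) ≫ eqToHom (mul_assoc X' Y' Z').symm
  tens_one_left : ∀ {X Y : C} (f : X ⟶ Y),
      tens (𝟙 (1 : C)) f = eqToHom (one_mul X) ≫ f ≫ eqToHom (one_mul Y).symm
  tens_one_right : ∀ {X Y : C} (f : X ⟶ Y),
      tens f (𝟙 (1 : C)) = eqToHom (mul_one X) ≫ f ≫ eqToHom (mul_one Y).symm

/-- A raw optic over a strict monoidal category `C`, from the list of pairs `l` to the
pair `⟨X|T⟩`: a tuple of morphisms `f₀ : X ⟶ M₁*A₁*N₁`,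
`fᵢ : Mᵢ*Bᵢ*Nᵢ ⟶ Mᵢ₊₁*Aᵢ₊₁*Nᵢ₊₁`, `fₙ : Mₙ*Bₙ*Nₙ ⟶ T` for a choice of middle objects
`Mᵢ`, `Nᵢ`.  A nullary raw optic is a single morphism `X ⟶ T`. -/
inductive RawT (C : Type u) [Category.{v} C] [Monoid C] [SMC C] :
    C → List (C × C) → C → Type (max u v)
  | nil {X T : C} (f : X ⟶ T) : RawT C X [] T
  | cons {X T A B : C} {l : List (C × C)} (M N : C) (f : X ⟶ M * A * N)
      (rest : RawT C (M * B * N) l T) : RawT C X ((A, B) :: l) T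

namespace RawT

variable {C : Type u} [Category.{v} C] [Monoid C] [SMC C]

def castL {X T : C} {l l' : List (C × C)} (h : l = l') (r : RawT C X l T) :
    RawT C X l' T := by subst h; exact r

def castSrc {X X' T : C} {l : List (C × C)} (h : X = X') (r : RawT C X l T) :
    RawT C X' l T := by subst h; exact r

/-- Whiskering a raw optic on both sides by objects `M`, `N`. -/
def whisk (M N : C) : ∀ {X T : C} {l : List (C × C)},
    RawT C X l T → RawT C (M * X * N) l (M * T * N)
  | _, _, _, .nil f => .nil (SMC.tens (SMC.tens (𝟙 M) f) (𝟙 N))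
  | _, _, _, .cons (A := A) (B := B) M' N' f rest =>
      .cons (M * M') (N' * N)
        (SMC.tens (SMC.tens (𝟙 M) f) (𝟙 N) ≫ eqToHom (by simp [mul_assoc]))
        ((whisk M N rest).castSrc (by simp [mul_assoc]))

/-- Precompose a raw optic with a morphism. -/
def precomp {W X T : C} {l : List (C × C)} (e : W ⟶ X) :
    RawT C X l T → RawT C W l T
  | .nil f => .nil (e ≫ f)
  | .cons M N f rest => .cons M N (e ≫ f) rest

/-- Concatenation of raw optics. -/
def append : ∀ {X T U : C} {l l' : List (C × C)},
    RawT C X l T → RawT C T l' U → RawT C X (l ++ l') U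
  | _, _, _, _, _, .nil f, s => s.precomp f
  | _, _, _, _, _, .cons M N f rest, s => .cons M N f (rest.append s)

/-- Composition of raw optics: substitution of a raw optic `G` into the hole of `F`
in position `l₁.length`, whiskering the components of `G` by the middle objects. -/
def subst : ∀ (l₁ : List (C × C)) {l₂ : List (C × C)} {X T A B : C} {l' : List (C × C)},
    RawT C X (l₁ ++ (A, B) :: l₂) T → RawT C A l' B → RawT C X (l₁ ++ l' ++ l₂) T
  | [], _, _, _, _, _, _, F, G =>
      match F with
      | .cons M N f rest => ((whisk M N G).append rest).precomp f
  | _ :: l₁, _, _, _, _, _, _, F, G =>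
      match F with
      | .cons M N f rest => .cons M N f (subst l₁ rest G)

/-- The identity raw optic on `⟨A|B⟩`. -/
def idRaw (A B : C) : RawT C A [(A, B)] B :=
  .cons 1 1 (eqToHom (by simp)) (.nil (eqToHom (by simp)))

end RawT

/-- Diagram contexts over a strict monoidal category `C`: formal terms built from
morphisms of `C`, named typed holes, sequential and parallel composition. -/
inductive CTm (C : Type u) [Category.{v} C] [Monoid C] [SMC C] : C → C → Type (max u v)
  | of {X Y : C} (f : X ⟶ Y) : CTm C X Y
  | hole (n : ℕ) (A B : C) : CTm C A B
  | seq {X Y Z : C} : CTm C X Y → CTm C Y Z → CTm C X Z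
  | par {X Y X' Y' : C} : CTm C X Y → CTm C X' Y' → CTm C (X * X') (Y * Y')

namespace CTm

variable {C : Type u} [Category.{v} C] [Monoid C] [SMC C]

def castc {X X' Y Y' : C} (h1 : X = X') (h2 : Y = Y') (t : CTm C X Y) : CTm C X' Y' := by
  subst h1; subst h2; exact t

/-- Renaming of holes. -/
def rename (ρ : ℕ → ℕ) : ∀ {X Y : C}, CTm C X Y → CTm C X Y
  | _, _, .of f => .of f
  | _, _, .hole n A B => .hole (ρ n) A B
  | _, _, .seq a b => .seq (a.rename ρ) (b.rename ρ)
  | _, _, .par a b => .par (a.rename ρ) (b.rename ρ)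

/-- The list of (named, typed) holes occurring in a diagram context, in order. -/
def holesOf : ∀ {X Y : C}, CTm C X Y → List (ℕ × C × C)
  | _, _, .of _ => []
  | _, _, .hole n A B => [(n, A, B)]
  | _, _, .seq a b => a.holesOf ++ b.holesOf
  | _, _, .par a b => a.holesOf ++ b.holesOf

/-- Filling the holes named `n` of type `⟨A|B⟩` with a diagram context `u`. -/
def fill [DecidableEq C] (n : ℕ) {A B : C} (u : CTm C A B) :
    ∀ {X Y : C}, CTm C X Y → CTm C X Y
  | _, _, .of f => .of f
  | _, _, .hole m A' B' =>
      if h : m = n ∧ A = A' ∧ B = B' then u.castc h.2.1 h.2.2 else .hole m A' B'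
  | _, _, .seq a b => .seq (fill n u a) (fill n u b)
  | _, _, .par a b => .par (fill n u a) (fill n u b)

/-- Evaluation of a hole-free diagram context as a morphism of `C`. -/
def evalO : ∀ {X Y : C}, CTm C X Y → Option (X ⟶ Y)
  | _, _, .of f => some f
  | _, _, .hole _ _ _ => none
  | _, _, .seq a b => do pure ((← a.evalO) ≫ (← b.evalO))
  | _, _, .par a b => do pure (SMC.tens (← a.evalO) (← b.evalO))

end CTm

/-- Equality of diagram contexts over a strict monoidal category: the congruence
generated by the strict monoidal equations together with the identification of formal
composites of morphisms of `C` with actual composites in `C`. -/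
inductive CTmEq (C : Type u) [Category.{v} C] [Monoid C] [SMC C] :
    ∀ {X Y : C}, CTm C X Y → CTm C X Y → Prop
  | refl {X Y} (t : CTm C X Y) : CTmEq C t t
  | symm {X Y} {t u : CTm C X Y} : CTmEq C t u → CTmEq C u t
  | trans {X Y} {t u v : CTm C X Y} : CTmEq C t u → CTmEq C u v → CTmEq C t v
  | seq_congr {X Y Z} {t t' : CTm C X Y} {u u' : CTm C Y Z} :
      CTmEq C t t' → CTmEq C u u' → CTmEq C (t.seq u) (t'.seq u')
  | par_congr {X Y X' Y'} {t t' : CTm C X Y} {u u' : CTm C X' Y'} :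
      CTmEq C t t' → CTmEq C u u' → CTmEq C (t.par u) (t'.par u')
  | of_comp {X Y Z} (f : X ⟶ Y) (g : Y ⟶ Z) :
      CTmEq C (.of (f ≫ g)) ((CTm.of f).seq (.of g))
  | of_tens {X Y X' Y'} (f : X ⟶ Y) (g : X' ⟶ Y') :
      CTmEq C (.of (SMC.tens f g)) ((CTm.of f).par (.of g))
  | seq_assoc {W X Y Z} (t₁ : CTm C W X) (t₂ : CTm C X Y) (t₃ : CTm C Y Z) :
      CTmEq C ((t₁.seq t₂).seq t₃) (t₁.seq (t₂.seq t₃))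
  | seq_id_right {X Y} (t : CTm C X Y) : CTmEq C (t.seq (.of (𝟙 Y))) t
  | seq_id_left {X Y} (t : CTm C X Y) : CTmEq C ((CTm.of (𝟙 X)).seq t) t
  | par_assoc {X₁ Y₁ X₂ Y₂ X₃ Y₃} (t₁ : CTm C X₁ Y₁) (t₂ : CTm C X₂ Y₂) (t₃ : CTm C X₃ Y₃) :
      CTmEq C (((t₁.par t₂).par t₃).castc (mul_assoc X₁ X₂ X₃) (mul_assoc Y₁ Y₂ Y₃))
        (t₁.par (t₂.par t₃))
  | par_one_left {X Y} (t : CTm C X Y) :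
      CTmEq C (((CTm.of (𝟙 (1 : C))).par t).castc (one_mul X) (one_mul Y)) t
  | par_one_right {X Y} (t : CTm C X Y) :
      CTmEq C ((t.par (.of (𝟙 (1 : C)))).castc (mul_one X) (mul_one Y)) t
  | interchange {X Y Z X' Y' Z'} (t₁ : CTm C X Y) (t₂ : CTm C Y Z)
      (t₃ : CTm C X' Y') (t₄ : CTm C Y' Z') :
      CTmEq C ((t₁.seq t₂).par (t₃.seq t₄)) ((t₁.par t₃).seq (t₂.par t₄))
  | cast_eq {X X' Y Y'} (h1 : X = X') (h2 : Y = Y') (t : CTm C X Y) :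
      CTmEq C (t.castc h1 h2) ((CTm.of (CategoryTheory.eqToHom h1.symm)).seq
        (t.seq (.of (CategoryTheory.eqToHom h2))))

/-- Gluing a raw optic into a diagram context, numbering its holes `k, k+1, …`
from left to right. -/
def RawT.glue {C : Type u} [Category.{v} C] [Monoid C] [SMC C] :
    ∀ {X T : C} {l : List (C × C)}, ℕ → RawT C X l T → CTm C X T
  | _, _, _, _, .nil f => .of f
  | _, _, _, k, .cons (A := A) (B := B) M N f rest =>
      (CTm.of f).seq
        ((((CTm.of (𝟙 M)).par (.hole k A B)).par (.of (𝟙 N))).seq (rest.glue (k + 1)))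

section GlueAux
open CTm RawT
variable {C : Type u} [Category.{v} C] [Monoid C] [SMC C]

instance {X Y : C} : Trans (CTmEq C (X := X) (Y := Y)) (CTmEq C (X := X) (Y := Y))
    (CTmEq C (X := X) (Y := Y)) := ⟨CTmEq.trans⟩

theorem e_eq {X Y : C} {t u : CTm C X Y} (h : t = u) : CTmEq C t u := h ▸ .refl t

/-- `eqToHom`-conjugation of a diagram context. -/
def ec {X X' Y Y' : C} (h1 : X' = X) (t : CTm C X Y) (h2 : Y = Y') : CTm C X' Y' :=
  (CTm.of (eqToHom h1)).seq (t.seq (.of (eqToHom h2)))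

theorem e_cast_ec {X X' Y Y' : C} (h1 : X = X') (h2 : Y = Y') (t : CTm C X Y) :
    CTmEq C (t.castc h1 h2) (ec h1.symm t h2) := CTmEq.cast_eq h1 h2 t

theorem e_ec_congr {X X' Y Y' : C} (h1 : X' = X) (h2 : Y = Y') {t u : CTm C X Y}
    (h : CTmEq C t u) : CTmEq C (ec h1 t h2) (ec h1 u h2) :=
  .seq_congr (.refl _) (.seq_congr h (.refl _))

theorem e_ec_rfl {X Y : C} (t : CTm C X Y) : CTmEq C (ec rfl t rfl) t := by
  unfold ec; simp only [eqToHom_refl]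
  exact .trans (.seq_id_left _) (.seq_id_right _)

theorem e_ec_ec {X X' X'' Y Y' Y'' : C} (g1 : X'' = X') (h1 : X' = X) (t : CTm C X Y)
    (h2 : Y = Y') (g2 : Y' = Y'') :
    CTmEq C (ec g1 (ec h1 t h2) g2) (ec (g1.trans h1) t (h2.trans g2)) := by
  subst g1; subst h1; subst h2; subst g2
  exact e_ec_congr rfl rfl (e_ec_rfl t)

theorem e_ec_cancel {X X' Y Y' : C} (h1 : X' = X) (h2 : Y = Y') (t : CTm C X Y) :
    CTmEq C (ec h1.symm (ec h1 t h2) h2.symm) t :=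
  .trans (e_ec_ec _ _ _ _ _) (e_ec_rfl t)

theorem e_ec_flip {X X' Y Y' : C} {h1 : X' = X} {h2 : Y = Y'} {t : CTm C X Y}
    {u : CTm C X' Y'} (h : CTmEq C u (ec h1 t h2)) :
    CTmEq C t (ec h1.symm u h2.symm) :=
  .symm (.trans (e_ec_congr _ _ h) (e_ec_cancel _ _ t))

theorem e_trans_ec {X X' X'' Y Y' Y'' : C} {h1 : X'' = X'} {h2 : Y' = Y''}
    {g1 : X' = X} {g2 : Y = Y'} {L : CTm C X'' Y''} {S : CTm C X' Y'} {S' : CTm C X Y}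
    (h : CTmEq C L (ec h1 S h2)) (h' : CTmEq C S (ec g1 S' g2)) :
    CTmEq C L (ec (h1.trans g1) S' (g2.trans h2)) :=
  h.trans ((e_ec_congr _ _ h').trans (e_ec_ec _ _ _ _ _))

theorem e_seq_of_of {X Y Z : C} (f : X ⟶ Y) (g : Y ⟶ Z) :
    CTmEq C ((CTm.of f).seq (.of g)) (.of (f ≫ g)) := .symm (.of_comp f g)

theorem e_id_split (X : C) :
    CTmEq C (CTm.of (𝟙 X)) ((CTm.of (𝟙 X)).seq (.of (𝟙 X))) :=
  .trans (e_eq (by rw [Category.id_comp (𝟙 X)])) (.of_comp _ _)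

theorem e_id_par_id (M N : C) :
    CTmEq C ((CTm.of (𝟙 M)).par (.of (𝟙 N))) (.of (𝟙 (M * N))) :=
  .trans (.symm (.of_tens _ _)) (e_eq (by rw [SMC.tens_id]))

theorem e_id_par_seq {X Y Z : C} (M : C) (a : CTm C X Y) (b : CTm C Y Z) :
    CTmEq C ((CTm.of (𝟙 M)).par (a.seq b))
      (((CTm.of (𝟙 M)).par a).seq ((CTm.of (𝟙 M)).par b)) :=
  .trans (.par_congr (e_id_split M) (.refl _)) (.interchange _ _ _ _)

theorem e_seq_par_id {X Y Z : C} (N : C) (a : CTm C X Y) (b : CTm C Y Z) :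
    CTmEq C ((a.seq b).par (CTm.of (𝟙 N)))
      ((a.par (CTm.of (𝟙 N))).seq (b.par (.of (𝟙 N)))) :=
  .trans (.par_congr (.refl _) (e_id_split N)) (.interchange _ _ _ _)

theorem e_sandwich_seq {X Y Z : C} (M N : C) (a : CTm C X Y) (b : CTm C Y Z) :
    CTmEq C (((CTm.of (𝟙 M)).par (a.seq b)).par (.of (𝟙 N)))
      ((((CTm.of (𝟙 M)).par a).par (.of (𝟙 N))).seq
        (((CTm.of (𝟙 M)).par b).par (.of (𝟙 N)))) :=
  .trans (.par_congr (e_id_par_seq M a b) (.refl _)) (e_seq_par_id N _ _)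

theorem e_par_ecL {X X' Y Y' Z W : C} (h1 : X' = X) (h2 : Y = Y') (u : CTm C X Y)
    (v : CTm C Z W) :
    CTmEq C ((ec h1 u h2).par v)
      (ec (congrArg (· * Z) h1) (u.par v) (congrArg (· * W) h2)) := by
  subst h1; subst h2
  exact .trans (.par_congr (e_ec_rfl u) (.refl v)) (.symm (e_ec_rfl _))

theorem e_par_ecR {X X' Y Y' Z W : C} (h1 : X' = X) (h2 : Y = Y') (u : CTm C X Y)
    (v : CTm C Z W) :
    CTmEq C (v.par (ec h1 u h2))
      (ec (congrArg (Z * ·) h1) (v.par u) (congrArg (W * ·) h2)) := by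
  subst h1; subst h2
  exact .trans (.par_congr (.refl v) (e_ec_rfl u)) (.symm (e_ec_rfl _))

theorem e_par_assoc_ec {X₁ Y₁ X₂ Y₂ X₃ Y₃ : C} (t₁ : CTm C X₁ Y₁) (t₂ : CTm C X₂ Y₂)
    (t₃ : CTm C X₃ Y₃) :
    CTmEq C (t₁.par (t₂.par t₃))
      (ec (mul_assoc X₁ X₂ X₃).symm ((t₁.par t₂).par t₃) (mul_assoc Y₁ Y₂ Y₃)) :=
  .trans (.symm (.par_assoc t₁ t₂ t₃)) (e_cast_ec _ _ _)

theorem e_par_assoc_ec' {X₁ Y₁ X₂ Y₂ X₃ Y₃ : C} (t₁ : CTm C X₁ Y₁) (t₂ : CTm C X₂ Y₂)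
    (t₃ : CTm C X₃ Y₃) :
    CTmEq C ((t₁.par t₂).par t₃)
      (ec (mul_assoc X₁ X₂ X₃) (t₁.par (t₂.par t₃)) (mul_assoc Y₁ Y₂ Y₃).symm) :=
  e_ec_flip (e_par_assoc_ec t₁ t₂ t₃)

theorem e_par_one_left {X Y : C} (t : CTm C X Y) :
    CTmEq C ((CTm.of (𝟙 (1 : C))).par t) (ec (one_mul X) t (one_mul Y).symm) :=
  e_ec_flip (CTmEq.symm (.trans (.symm (e_cast_ec _ _ _)) (.par_one_left t)))

theorem e_par_one_right {X Y : C} (t : CTm C X Y) :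
    CTmEq C (t.par (CTm.of (𝟙 (1 : C)))) (ec (mul_one X) t (mul_one Y).symm) :=
  e_ec_flip (CTmEq.symm (.trans (.symm (e_cast_ec _ _ _)) (.par_one_right t)))

end GlueAux
section CastC
variable {C : Type u} [Category.{v} C] [Monoid C] [SMC C]
theorem castc_castc {X X' X'' Y Y' Y'' : C} (h1 : X = X') (h2 : Y = Y')
    (g1 : X' = X'') (g2 : Y' = Y'') (t : CTm C X Y) :
    (t.castc h1 h2).castc g1 g2 = t.castc (h1.trans g1) (h2.trans g2) := by
  subst h1; subst h2; subst g1; subst g2; rfl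
end CastC
section GlueAux2
open CTm RawT
variable {C : Type u} [Category.{v} C] [Monoid C] [SMC C]

theorem e_par3 {A B : C} (M M' N' N : C) (t : CTm C A B)
    (e₁ : M * M' * A * (N' * N) = M * (M' * A * N') * N)
    (e₂ : M * (M' * B * N') * N = M * M' * B * (N' * N)) :
    CTmEq C (((CTm.of (𝟙 (M * M'))).par t).par (.of (𝟙 (N' * N))))
      (ec e₁ (((CTm.of (𝟙 M)).par (((CTm.of (𝟙 M')).par t).par (.of (𝟙 N')))).par
        (.of (𝟙 N))) e₂) := by
  have s0 : CTmEq C (((CTm.of (𝟙 (M * M'))).par t).par (.of (𝟙 (N' * N))))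
      ((((CTm.of (𝟙 M)).par (.of (𝟙 M'))).par t).par
        ((CTm.of (𝟙 N')).par (.of (𝟙 N)))) :=
    .par_congr (.par_congr (.symm (e_id_par_id M M')) (.refl t))
      (.symm (e_id_par_id N' N))
  have s1 := e_par_assoc_ec (((CTm.of (𝟙 M)).par (.of (𝟙 M'))).par t)
      (CTm.of (𝟙 N')) (CTm.of (𝟙 N))
  have k1 := e_par_assoc_ec' (CTm.of (𝟙 M)) (CTm.of (𝟙 M')) t
  have k2 := CTmEq.trans (.par_congr k1 (.refl (CTm.of (𝟙 N'))))
      (e_par_ecL _ _ _ (CTm.of (𝟙 N')))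
  have k3 := e_par_assoc_ec' (CTm.of (𝟙 M)) ((CTm.of (𝟙 M')).par t) (CTm.of (𝟙 N'))
  have k4 := e_trans_ec k2 k3
  have k5 := CTmEq.trans (.par_congr k4 (.refl (CTm.of (𝟙 N))))
      (e_par_ecL _ _ _ (CTm.of (𝟙 N)))
  exact e_trans_ec (s0.trans s1) k5

theorem rename_castc {X X' Y Y' : C} (h1 : X = X') (h2 : Y = Y') (t : CTm C X Y)
    (ρ : ℕ → ℕ) : (t.castc h1 h2).rename ρ = (t.rename ρ).castc h1 h2 := by
  subst h1; subst h2; rfl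

theorem e_rename {X Y : C} {t u : CTm C X Y} (ρ : ℕ → ℕ) (h : CTmEq C t u) :
    CTmEq C (t.rename ρ) (u.rename ρ) := by
  induction h with
  | refl t => exact .refl _
  | symm _ ih => exact .symm ih
  | trans _ _ ih1 ih2 => exact .trans ih1 ih2
  | seq_congr _ _ ih1 ih2 => exact .seq_congr ih1 ih2
  | par_congr _ _ ih1 ih2 => exact .par_congr ih1 ih2
  | of_comp f g => exact .of_comp f g
  | of_tens f g => exact .of_tens f g
  | seq_assoc t₁ t₂ t₃ => exact .seq_assoc _ _ _
  | seq_id_right t => exact .seq_id_right _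
  | seq_id_left t => exact .seq_id_left _
  | par_assoc t₁ t₂ t₃ => rw [rename_castc]; exact .par_assoc _ _ _
  | par_one_left t => rw [rename_castc]; exact .par_one_left _
  | par_one_right t => rw [rename_castc]; exact .par_one_right _
  | interchange t₁ t₂ t₃ t₄ => exact .interchange _ _ _ _
  | cast_eq h1 h2 t => rw [rename_castc]; exact .cast_eq _ _ _

theorem rename_rename {X Y : C} (ρ σ : ℕ → ℕ) (t : CTm C X Y) :
    (t.rename ρ).rename σ = t.rename (fun n => σ (ρ n)) := by
  induction t with
  | of f => rfl
  | hole n A B => rfl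
  | seq a b iha ihb => simp only [CTm.rename, iha, ihb]
  | par a b iha ihb => simp only [CTm.rename, iha, ihb]

theorem rename_congr_holes {X Y : C} {ρ σ : ℕ → ℕ} (t : CTm C X Y)
    (h : ∀ p ∈ t.holesOf, ρ p.1 = σ p.1) : t.rename ρ = t.rename σ := by
  induction t with
  | of f => rfl
  | hole n A B => simp only [CTm.rename, h (n, A, B) (by simp [CTm.holesOf])]
  | seq a b iha ihb =>
      simp only [CTm.rename]
      rw [iha fun p hp => h p (by simp [CTm.holesOf, hp]),
        ihb fun p hp => h p (by simp [CTm.holesOf, hp])]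
  | par a b iha ihb =>
      simp only [CTm.rename]
      rw [iha fun p hp => h p (by simp [CTm.holesOf, hp]),
        ihb fun p hp => h p (by simp [CTm.holesOf, hp])]

theorem glue_holes_bound {X T : C} {l : List (C × C)} (r : RawT C X l T) (k : ℕ) :
    ∀ p ∈ (r.glue k).holesOf, k ≤ p.1 ∧ p.1 < k + l.length := by
  induction r generalizing k with
  | nil f => intro p hp; simp [RawT.glue, CTm.holesOf] at hp
  | cons M N f rest ih =>
      intro p hp
      simp only [RawT.glue, CTm.holesOf, List.nil_append, List.append_nil,
        List.cons_append, List.mem_cons, List.mem_append] at hp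
      rcases hp with h | h
      · subst h; simp only [List.length_cons]; omega
      · have := ih (k + 1) p h
        simp only [List.length_cons]; omega

theorem glue_rename_add {X T : C} {l : List (C × C)} (r : RawT C X l T) (k m : ℕ) :
    (r.glue k).rename (· + m) = r.glue (k + m) := by
  induction r generalizing k with
  | nil f => rfl
  | cons M N f rest ih =>
      simp only [RawT.glue, CTm.rename]
      rw [ih, Nat.add_right_comm]

theorem glue_castSrc {X X' T : C} {l : List (C × C)} (h : X = X') (r : RawT C X l T)
    (k : ℕ) : ((r.castSrc h).glue k) = (r.glue k).castc h rfl := by subst h; rfl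

/-- Casting the target of a raw optic. -/
def rawCastTgt {X T T' : C} {l : List (C × C)} (h : T = T') (r : RawT C X l T) :
    RawT C X l T' := by subst h; exact r

theorem glue_rawCastTgt {X T T' : C} {l : List (C × C)} (h : T = T') (r : RawT C X l T)
    (k : ℕ) : ((rawCastTgt h r).glue k) = (r.glue k).castc rfl h := by subst h; rfl

theorem glue_precomp {W X T : C} {l : List (C × C)} (e : W ⟶ X) (s : RawT C X l T)
    (k : ℕ) : CTmEq C ((s.precomp e).glue k) ((CTm.of e).seq (s.glue k)) := by
  cases s with
  | nil f => exact .of_comp e f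
  | cons M N f rest =>
      exact .trans (.seq_congr (.of_comp e f) (.refl _)) (.seq_assoc _ _ _)

theorem glue_append {X T U : C} {l l' : List (C × C)} (r : RawT C X l T)
    (s : RawT C T l' U) (k : ℕ) :
    CTmEq C ((r.append s).glue k) ((r.glue k).seq (s.glue (k + l.length))) := by
  induction r generalizing k with
  | nil f => exact glue_precomp f s k
  | cons M N f rest ih =>
      have h1 := ih s (k + 1)
      rw [Nat.add_right_comm] at h1
      exact .trans (.seq_congr (.refl _) (.trans (.seq_congr (.refl _) h1)
        (.symm (.seq_assoc _ _ _)))) (.symm (.seq_assoc _ _ _))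

section Fill
variable [DecidableEq C]

theorem fill_hole_self (n : ℕ) {A B : C} (u : CTm C A B) :
    CTm.fill n u (CTm.hole n A B) = u := by
  rw [CTm.fill, dif_pos ⟨rfl, rfl, rfl⟩]; rfl

theorem fill_hole_ne {n m : ℕ} (h : m ≠ n) {A B A' B' : C} (u : CTm C A B) :
    CTm.fill n u (CTm.hole m A' B') = CTm.hole m A' B' := by
  rw [CTm.fill, dif_neg (by tauto)]

theorem fill_not_mem {X Y : C} (n : ℕ) {A B : C} (u : CTm C A B) (t : CTm C X Y)
    (h : ∀ p ∈ t.holesOf, p.1 ≠ n) : CTm.fill n u t = t := by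
  induction t with
  | of f => rfl
  | hole m A' B' => exact fill_hole_ne (h (m, A', B') (by simp [CTm.holesOf])) u
  | seq a b iha ihb =>
      simp only [CTm.fill]
      rw [iha fun p hp => h p (by simp [CTm.holesOf, hp]),
        ihb fun p hp => h p (by simp [CTm.holesOf, hp])]
  | par a b iha ihb =>
      simp only [CTm.fill]
      rw [iha fun p hp => h p (by simp [CTm.holesOf, hp]),
        ihb fun p hp => h p (by simp [CTm.holesOf, hp])]

end Fill
end GlueAux2
section GlueAux3
open CTm RawT
variable {C : Type u} [Category.{v} C] [Monoid C] [SMC C]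

theorem e_collapse {X V V' Q1 Q2 R : C} (g : X ⟶ V) (d1 : V = V') (d2 : Q1 = Q2)
    (u : CTm C V Q1) (v : CTm C Q1 R) :
    CTmEq C ((CTm.of (g ≫ eqToHom d1)).seq ((ec d1.symm u d2).seq (ec d2.symm v rfl)))
      ((CTm.of g).seq (u.seq v)) := by
  subst d1; subst d2
  simp only [eqToHom_refl, Category.comp_id]
  exact .seq_congr (.refl _) (.seq_congr (e_ec_rfl u) (e_ec_rfl v))

theorem glue_whisk {X T : C} {l : List (C × C)} (M N : C) (r : RawT C X l T) (k : ℕ) :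
    CTmEq C ((RawT.whisk M N r).glue k)
      (((CTm.of (𝟙 M)).par (r.glue k)).par (.of (𝟙 N))) := by
  induction r generalizing k with
  | nil f => exact .trans (.of_tens _ _) (.par_congr (.of_tens _ _) (.refl _))
  | cons M' N' f rest ih =>
      have hofg : CTmEq C (CTm.of (SMC.tens (SMC.tens (𝟙 M) f) (𝟙 N)))
          (((CTm.of (𝟙 M)).par (.of f)).par (.of (𝟙 N))) :=
        .trans (.of_tens _ _) (.par_congr (.of_tens _ _) (.refl _))
      refine CTmEq.trans (CTmEq.trans (.seq_congr (.refl _) (.seq_congr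
          (e_par3 M M' N' N (.hole k _ _) (by simp [mul_assoc]) (by simp [mul_assoc]))
          (by rw [glue_castSrc]; exact e_cast_ec _ _ _)))
        (e_collapse _ _ _ _ _)) ?_
      exact CTmEq.symm (CTmEq.trans (e_sandwich_seq M N _ _)
        (.seq_congr (.symm hofg) (CTmEq.trans (e_sandwich_seq M N _ _)
          (.seq_congr (.refl _) (.symm (ih (k + 1)))))))

theorem e_glue_idRaw (A B : C) :
    CTmEq C ((RawT.idRaw A B).glue 0) (.hole 0 A B) := by
  have p : A = 1 * A * 1 := by simp
  have q : (1 * B * 1 : C) = B := by simp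
  have hP := e_trans_ec
    (CTmEq.trans (.par_congr (e_par_one_left (CTm.hole 0 A B)) (.refl (CTm.of (𝟙 (1 : C)))))
      (e_par_ecL _ _ _ _))
    (e_par_one_right (CTm.hole 0 A B))
  exact ((e_ec_congr p q hP).trans (e_ec_ec _ _ _ _ _)).trans (e_ec_rfl _)

end GlueAux3
section GlueAux4
open CTm RawT
variable {C : Type u} [Category.{v} C] [Monoid C] [SMC C]

theorem glue_castL {X T : C} {l l' : List (C × C)} (h : l = l') (r : RawT C X l T)
    (k : ℕ) : (r.castL h).glue k = r.glue k := by subst h; rfl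

theorem rename_append_left {X Y : C} (g : CTm C X Y) (ha hb : List (ℕ × C × C))
    (hbound : ∀ p ∈ g.holesOf, p.1 < ha.length) :
    g.rename (fun i => ((ha ++ hb).map Prod.fst).getD i 0)
      = g.rename (fun i => (ha.map Prod.fst).getD i 0) := by
  apply rename_congr_holes
  intro p hp
  rw [List.map_append, List.getD_append]
  rw [List.length_map]
  exact hbound p hp

theorem rename_append_right {X Y : C} (g : CTm C X Y) (ha hb : List (ℕ × C × C)) :
    g.rename (fun i => ((ha ++ hb).map Prod.fst).getD (i + ha.length) 0)
      = g.rename (fun i => (hb.map Prod.fst).getD i 0) := by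
  apply rename_congr_holes
  intro p _
  rw [List.map_append, List.getD_append_right]
  · rw [List.length_map]; simp
  · rw [List.length_map]; omega

theorem e_parRaw {X Y X' Y' : C} {la lb : List (C × C)} (ra : RawT C X la Y)
    (rb : RawT C X' lb Y') :
    ∃ r : RawT C (X * X') (la ++ lb) (Y * Y'),
      CTmEq C (r.glue 0) ((ra.glue 0).par (rb.glue (0 + la.length))) := by
  have s2 : (1 : C) * X * X' = X * X' := by simp
  have t2 : (1 : C) * Y * X' = Y * X' := by simp
  have s4 : Y * X' * 1 = Y * X' := by simp
  have t4 : Y * Y' * 1 = Y * Y' := by simp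
  refine ⟨(rawCastTgt t2 ((RawT.whisk 1 X' ra).castSrc s2)).append
    (rawCastTgt t4 ((RawT.whisk Y 1 rb).castSrc s4)), ?_⟩
  have hw1 : CTmEq C ((rawCastTgt t2 ((RawT.whisk 1 X' ra).castSrc s2)).glue 0)
      ((ra.glue 0).par (.of (𝟙 X'))) := by
    rw [glue_rawCastTgt, glue_castSrc, castc_castc]
    have base2 : CTmEq C (((CTm.of (𝟙 (1 : C))).par (ra.glue 0)).par (.of (𝟙 X')))
        (ec (congrArg (· * X') (one_mul X)) ((ra.glue 0).par (.of (𝟙 X')))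
          (congrArg (· * X') (one_mul Y).symm)) :=
      .trans (.par_congr (e_par_one_left _) (.refl _)) (e_par_ecL _ _ _ _)
    exact (((e_cast_ec _ _ _).trans
      (e_ec_congr _ _ ((glue_whisk 1 X' ra 0).trans base2))).trans
      (e_ec_ec _ _ _ _ _)).trans (e_ec_rfl _)
  have hw2 : CTmEq C ((rawCastTgt t4 ((RawT.whisk Y 1 rb).castSrc s4)).glue
      (0 + la.length)) ((CTm.of (𝟙 Y)).par (rb.glue (0 + la.length))) := by
    rw [glue_rawCastTgt, glue_castSrc, castc_castc]
    exact (((e_cast_ec _ _ _).trans (e_ec_congr _ _ ((glue_whisk Y 1 rb _).trans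
      (e_par_one_right _)))).trans (e_ec_ec _ _ _ _ _)).trans (e_ec_rfl _)
  refine (glue_append _ _ 0).trans ?_
  refine (CTmEq.seq_congr hw1 hw2).trans ?_
  exact (CTmEq.symm (.interchange _ _ _ _)).trans
    (.par_congr (.seq_id_right _) (.seq_id_left _))

theorem lemA [DecidableEq C] {X Y : C} (t : CTm C X Y) :
    ∃ r : RawT C X (t.holesOf.map (fun p => p.2)) Y,
      CTmEq C ((r.glue 0).rename (fun i => (t.holesOf.map Prod.fst).getD i 0)) t := by
  induction t with
  | of f => exact ⟨.nil f, .refl _⟩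
  | hole n A B =>
      refine ⟨RawT.idRaw A B, ?_⟩
      refine (e_rename _ (e_glue_idRaw A B)).trans (e_eq ?_)
      simp [CTm.rename, CTm.holesOf]
  | seq a b iha ihb =>
      obtain ⟨ra, ha⟩ := iha
      obtain ⟨rb, hb⟩ := ihb
      refine ⟨(ra.append rb).castL (by simp [CTm.holesOf, List.map_append]), ?_⟩
      rw [glue_castL]
      refine (e_rename _ (glue_append ra rb 0)).trans ?_
      show CTmEq C ((CTm.rename _ _).seq (CTm.rename _ _)) _
      have c1 := rename_append_left (C := C) (ra.glue 0) a.holesOf b.holesOf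
        (fun p hp => by
          have := (glue_holes_bound ra 0 p hp).2
          rw [List.length_map] at this
          omega)
      have c2 : CTm.rename (fun i => ((a.seq b).holesOf.map Prod.fst).getD i 0)
          (rb.glue (0 + (a.holesOf.map (fun p : ℕ × C × C => p.2)).length))
          = CTm.rename (fun i => (b.holesOf.map Prod.fst).getD i 0) (rb.glue 0) := by
        rw [← glue_rename_add rb 0, rename_rename]
        simp only [List.length_map]
        exact rename_append_right (rb.glue 0) a.holesOf b.holesOf
      show CTmEq C ((CTm.rename (fun i => ((a.seq b).holesOf.map Prod.fst).getD i 0)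
          (ra.glue 0)).seq _) _
      rw [c2]
      have c1' : CTm.rename (fun i => ((a.seq b).holesOf.map Prod.fst).getD i 0)
          (ra.glue 0) = CTm.rename (fun i => (a.holesOf.map Prod.fst).getD i 0)
          (ra.glue 0) := c1
      rw [c1']
      exact .seq_congr ha hb
  | par a b iha ihb =>
      obtain ⟨ra, ha⟩ := iha
      obtain ⟨rb, hb⟩ := ihb
      obtain ⟨r, hr⟩ := e_parRaw ra rb
      refine ⟨r.castL (by simp [CTm.holesOf, List.map_append]), ?_⟩
      rw [glue_castL]
      refine (e_rename _ hr).trans ?_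
      show CTmEq C ((CTm.rename _ _).par (CTm.rename _ _)) _
      have c1 := rename_append_left (C := C) (ra.glue 0) a.holesOf b.holesOf
        (fun p hp => by
          have := (glue_holes_bound ra 0 p hp).2
          rw [List.length_map] at this
          omega)
      have c2 : CTm.rename (fun i => ((a.par b).holesOf.map Prod.fst).getD i 0)
          (rb.glue (0 + (a.holesOf.map (fun p : ℕ × C × C => p.2)).length))
          = CTm.rename (fun i => (b.holesOf.map Prod.fst).getD i 0) (rb.glue 0) := by
        rw [← glue_rename_add rb 0, rename_rename]
        simp only [List.length_map]
        exact rename_append_right (rb.glue 0) a.holesOf b.holesOf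
      rw [c2]
      have c1' : CTm.rename (fun i => ((a.par b).holesOf.map Prod.fst).getD i 0)
          (ra.glue 0) = CTm.rename (fun i => (a.holesOf.map Prod.fst).getD i 0)
          (ra.glue 0) := c1
      rw [c1']
      exact .par_congr ha hb

end GlueAux4
section GlueAux5
open CTm RawT
variable {C : Type u} [Category.{v} C] [Monoid C] [SMC C]

theorem lemB [DecidableEq C] (l₁ : List (C × C)) {l₂ : List (C × C)} {X T A B : C}
    {l' : List (C × C)} (F : RawT C X (l₁ ++ (A, B) :: l₂) T) (G : RawT C A l' B)
    (k : ℕ) :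
    CTmEq C ((RawT.subst l₁ F G).glue k)
      (CTm.rename
        (fun j =>
          if j < l₁.length + k then j
          else if (l₁ ++ (A, B) :: l₂).length + k ≤ j then
            j - ((l₁ ++ (A, B) :: l₂).length + k) + (l₁.length + k)
          else j + l'.length - 1)
        (CTm.fill (l₁.length + k)
          (CTm.rename (· + ((l₁ ++ (A, B) :: l₂).length + k)) (G.glue 0))
          (F.glue k))) := by
  induction l₁ generalizing X k with
  | nil =>
      cases F with
      | cons M N f rest =>
          simp only [List.nil_append, List.length_nil, Nat.zero_add, List.length_cons]
          set ρ : ℕ → ℕ := fun j =>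
            if j < k then j
            else if l₂.length + 1 + k ≤ j then j - (l₂.length + 1 + k) + k
            else j + l'.length - 1 with hρ
          set u : CTm C A B :=
            CTm.rename (fun x => x + (l₂.length + 1 + k)) (G.glue 0) with hu0
          have hrestfill : CTm.fill k u (rest.glue (k + 1)) = rest.glue (k + 1) :=
            fill_not_mem _ _ _ (fun p hp => by
              have := (glue_holes_bound rest (k + 1) p hp).1; omega)
          have hfill : CTm.fill k u ((RawT.cons (A := A) (B := B) M N f rest).glue k)
              = (CTm.of f).seq ((((CTm.of (𝟙 M)).par u).par (.of (𝟙 N))).seq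
                (rest.glue (k + 1))) := by
            show (CTm.of f).seq ((((CTm.of (𝟙 M)).par
                (CTm.fill k u (CTm.hole k A B))).par (.of (𝟙 N))).seq
                (CTm.fill k u (rest.glue (k + 1)))) = _
            rw [fill_hole_self, hrestfill]
          have hu : CTm.rename ρ u = G.glue k := by
            rw [hu0, rename_rename]
            have e0 := glue_rename_add G 0 k
            rw [Nat.zero_add] at e0
            rw [← e0]
            apply rename_congr_holes
            intro p hp
            have hb := glue_holes_bound G 0 p hp
            show ρ (p.1 + (l₂.length + 1 + k)) = p.1 + k
            rw [hρ]
            simp only []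
            rw [if_neg (by omega), if_pos (by omega)]
            omega
          have hrest2 : CTm.rename ρ (rest.glue (k + 1)) = rest.glue (k + l'.length) := by
            have e1 := glue_rename_add rest 0 (k + 1)
            rw [Nat.zero_add] at e1
            have e2 := glue_rename_add rest 0 (k + l'.length)
            rw [Nat.zero_add] at e2
            rw [← e1, rename_rename, ← e2]
            apply rename_congr_holes
            intro p hp
            have hb := glue_holes_bound rest 0 p hp
            show ρ (p.1 + (k + 1)) = p.1 + (k + l'.length)
            rw [hρ]
            simp only []
            rw [if_neg (by omega), if_neg (by omega)]
            omega
          have hRHS : CTm.rename ρ ((CTm.of f).seq ((((CTm.of (𝟙 M)).par u).par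
              (.of (𝟙 N))).seq (rest.glue (k + 1))))
              = (CTm.of f).seq ((((CTm.of (𝟙 M)).par (G.glue k)).par (.of (𝟙 N))).seq
                (rest.glue (k + l'.length))) := by
            show (CTm.of f).seq ((((CTm.of (𝟙 M)).par (CTm.rename ρ u)).par
              (.of (𝟙 N))).seq (CTm.rename ρ (rest.glue (k + 1)))) = _
            rw [hu, hrest2]
          rw [hfill, hRHS]
          exact (glue_precomp f _ k).trans
            (CTmEq.trans (.seq_congr (.refl _) (glue_append _ rest k))
              (.seq_congr (.refl _) (.seq_congr (glue_whisk M N G k) (.refl _))))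
  | cons p l₁ ih =>
      obtain ⟨A₀, B₀⟩ := p
      cases F with
      | cons M N f rest =>
          simp only [List.cons_append, List.length_cons]
          have e_idx : l₁.length + 1 + k = l₁.length + (k + 1) := by omega
          have e_idx2 : (l₁ ++ (A, B) :: l₂).length + 1 + k
              = (l₁ ++ (A, B) :: l₂).length + (k + 1) := by omega
          rw [e_idx, e_idx2]
          set u : CTm C A B :=
            CTm.rename (fun x => x + ((l₁ ++ (A, B) :: l₂).length + (k + 1)))
              (G.glue 0) with hu0
          have hfill : CTm.fill (l₁.length + (k + 1)) u
              ((RawT.cons (A := A₀) (B := B₀) M N f rest).glue k)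
              = (CTm.of f).seq ((((CTm.of (𝟙 M)).par (CTm.hole k A₀ B₀)).par
                (.of (𝟙 N))).seq (CTm.fill (l₁.length + (k + 1)) u
                  (rest.glue (k + 1)))) := by
            show (CTm.of f).seq ((((CTm.of (𝟙 M)).par
                (CTm.fill (l₁.length + (k + 1)) u (CTm.hole k A₀ B₀))).par
                (.of (𝟙 N))).seq (CTm.fill (l₁.length + (k + 1)) u
                  (rest.glue (k + 1)))) = _
            rw [fill_hole_ne (by omega)]
          rw [hfill]
          refine CTmEq.seq_congr (.refl _) (CTmEq.seq_congr
            (CTmEq.par_congr (CTmEq.par_congr (.refl _) (e_eq ?_)) (.refl _))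
            (ih rest (k + 1)))
          show CTm.hole k A₀ B₀ = CTm.hole (if k < l₁.length + (k + 1) then k
            else if (l₁ ++ (A, B) :: l₂).length + (k + 1) ≤ k then
              k - ((l₁ ++ (A, B) :: l₂).length + (k + 1)) + (l₁.length + (k + 1))
            else k + l'.length - 1) A₀ B₀
          rw [if_pos (by omega)]

end GlueAux5
open RawT CTm in
/-- Gluing raw optics into diagram contexts is an identity-on-objects multifunctor
`q` from raw optics to diagram contexts, and it is full on the symmetrization:
it preserves identities and composition (up to the canonical renaming of holes),
and every diagram context arises as `q` of some raw optic after permuting the order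
of its holes. -/
theorem glue_multifunctor_full (C : Type u) [Category.{v} C] [Monoid C] [SMC C]
    [DecidableEq C] :
    -- `q` preserves identities
    (∀ A B : C, CTmEq C ((idRaw A B).glue 0) (.hole 0 A B)) ∧
    -- `q` preserves composition, up to the canonical renaming of hole names
    (∀ {X T A B : C} (l₁ l₂ : List (C × C)) {l' : List (C × C)}
      (F : RawT C X (l₁ ++ (A, B) :: l₂) T) (G : RawT C A l' B),
      CTmEq C ((RawT.subst l₁ F G).glue 0)
        (CTm.rename
          (fun j =>
            if j < l₁.length then j
            else if (l₁ ++ (A, B) :: l₂).length ≤ j then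
              j - (l₁ ++ (A, B) :: l₂).length + l₁.length
            else j + l'.length - 1)
          (CTm.fill l₁.length
            (CTm.rename (· + (l₁ ++ (A, B) :: l₂).length) (G.glue 0)) (F.glue 0)))) ∧
    -- `q` is full up to permutation of holes
    (∀ {X Y : C} (t : CTm C X Y) (l : List (C × C)),
      t.holesOf.Perm (((List.range l.length).zip l).map fun p => (p.1, p.2.1, p.2.2)) →
      ∃ (l' : List (C × C)) (_ : l'.Perm l) (r : RawT C X l' Y) (ρ : ℕ → ℕ),
        CTmEq C ((r.glue 0).rename ρ) t) := by
  refine ⟨e_glue_idRaw, ?_, ?_⟩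
  · intro X T A B l₁ l₂ l' F G
    exact lemB l₁ F G 0
  intro X Y t l hperm
  obtain ⟨r, hr⟩ := lemA t
  refine ⟨t.holesOf.map (fun p => p.2), ?_, r, _, hr⟩
  have heq : (((List.range l.length).zip l).map fun p => (p.1, p.2.1, p.2.2)).map
      (fun q : ℕ × C × C => q.2) = l := by
    rw [List.map_map]
    have h2 : ((fun q : ℕ × C × C => q.2) ∘ fun p : ℕ × (C × C) => (p.1, p.2.1, p.2.2))
        = Prod.snd := by funext p; rfl
    rw [h2]
    exact List.map_snd_zip (by simp)
  exact heq ▸ hperm.map (fun q : ℕ × C × C => q.2)
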